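/- C3*, the graph consisting of a triangle with one pendant edge, is the unique nontrivial uniquely C4+-saturated graph containing exactly one triangle. -/

import Mathlib

open SimpleGraph

/-- The diamond graph `C₄⁺`: a `4`-cycle with one chord, i.e. `K₄` minus an edge. -/
def diamond : SimpleGraph (Fin 4) := (⊤ : SimpleGraph (Fin 4)).deleteEdges {s(0, 1)}

/-- `G'` is a copy of `H` in `G`, i.e. a subgraph of `G` isomorphic to `H`. -/
def IsCopy {W V : Type*} (H : SimpleGraph W) {G : SimpleGraph V} (G' : G.Subgraph) : Prop :=
  Nonempty (G'.coe ≃g H)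

/-- `G` is uniquely `H`-saturated: `G` is `H`-free, and adding any non-edge
creates exactly one copy of `H`. -/
def UniquelySaturated {W V : Type*} (H : SimpleGraph W) (G : SimpleGraph V) : Prop :=
  (∀ G' : G.Subgraph, ¬ IsCopy H G') ∧
    ∀ u v : V, u ≠ v → ¬ G.Adj u v →
      ∃! G' : (G ⊔ SimpleGraph.fromEdgeSet {s(u, v)}).Subgraph, IsCopy H G'

/-- `C₃*`: a triangle with one pendant edge. -/
def C3star : SimpleGraph (Fin 4) :=
  SimpleGraph.fromEdgeSet {s(0, 1), s(0, 2), s(1, 2), s(2, 3)}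

set_option linter.unreachableTactic false
set_option linter.unusedTactic false

lemma C3star_adj (x y : Fin 4) : C3star.Adj x y ↔
    ((x = 0 ∧ y = 1) ∨ (x = 1 ∧ y = 0) ∨ (x = 0 ∧ y = 2) ∨ (x = 2 ∧ y = 0) ∨
     (x = 1 ∧ y = 2) ∨ (x = 2 ∧ y = 1) ∨ (x = 2 ∧ y = 3) ∨ (x = 3 ∧ y = 2)) := by
  rw [C3star, fromEdgeSet_adj]
  simp only [Set.mem_insert_iff, Set.mem_singleton_iff, Sym2.eq_iff]
  constructor
  · rintro ⟨h, hne⟩; tauto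
  · rintro (⟨rfl,rfl⟩|⟨rfl,rfl⟩|⟨rfl,rfl⟩|⟨rfl,rfl⟩|⟨rfl,rfl⟩|⟨rfl,rfl⟩|⟨rfl,rfl⟩|⟨rfl,rfl⟩) <;>
      exact ⟨by tauto, by decide⟩

instance : DecidableRel C3star.Adj := fun x y => decidable_of_iff' _ (C3star_adj x y)

lemma diamond_adj (x y : Fin 4) : diamond.Adj x y ↔ x ≠ y ∧ ¬(x = 0 ∧ y = 1) ∧ ¬(x = 1 ∧ y = 0) := by
  rw [diamond, deleteEdges_adj]
  simp only [top_adj, Set.mem_singleton_iff, Sym2.eq_iff]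
  tauto

instance : DecidableRel diamond.Adj := fun x y => decidable_of_iff' _ (diamond_adj x y)

/-- canonical adjacency pattern of a diamond copy on vertices p,q,r,s with missing pair {p,q} -/
def patAdj {V : Type*} (p q r s x y : V) : Prop :=
  (x = p ∨ x = q ∨ x = r ∨ x = s) ∧ (y = p ∨ y = q ∨ y = r ∨ y = s) ∧ x ≠ y ∧
    ¬(x = p ∧ y = q) ∧ ¬(x = q ∧ y = p)

lemma patAdj_symm {V : Type*} {p q r s x y : V} (h : patAdj p q r s x y) : patAdj p q r s y x := by
  obtain ⟨h1, h2, h3, h4, h5⟩ := h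
  exact ⟨h2, h1, h3.symm, fun ⟨a, b⟩ => h5 ⟨b, a⟩, fun ⟨a, b⟩ => h4 ⟨b, a⟩⟩

section
variable {V : Type*} {G : SimpleGraph V}

lemma iscopy_iff (G' : G.Subgraph) : IsCopy diamond G' ↔
    ∃ p q r s : V, p ≠ q ∧ p ≠ r ∧ p ≠ s ∧ q ≠ r ∧ q ≠ s ∧ r ≠ s ∧
      G'.verts = {p, q, r, s} ∧ (∀ x y, G'.Adj x y ↔ patAdj p q r s x y) := by
  constructor
  · rintro ⟨e⟩
    set f : Fin 4 → V := fun i => ((e.symm i : ↥G'.verts) : V) with hf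
    have hinj : Function.Injective f := fun i j h => e.symm.injective (Subtype.ext h)
    refine ⟨f 0, f 1, f 2, f 3, by simp [hinj.ne_iff], by simp [hinj.ne_iff], by simp [hinj.ne_iff],
      by simp [hinj.ne_iff], by simp [hinj.ne_iff], by simp [hinj.ne_iff], ?_, ?_⟩
    · apply Set.eq_of_subset_of_subset
      · intro w hw
        have h4 : ∀ i : Fin 4, i = 0 ∨ i = 1 ∨ i = 2 ∨ i = 3 := by decide
        have hw' : (⟨w, hw⟩ : ↥G'.verts) = e.symm (e ⟨w, hw⟩) := (e.symm_apply_apply _).symm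
        rcases h4 (e ⟨w, hw⟩) with h | h | h | h <;> rw [h] at hw' <;>
          [exact Or.inl (congrArg Subtype.val hw');
           exact Or.inr (Or.inl (congrArg Subtype.val hw'));
           exact Or.inr (Or.inr (Or.inl (congrArg Subtype.val hw')));
           exact Or.inr (Or.inr (Or.inr (congrArg Subtype.val hw')))]
      · intro w hw
        rcases hw with h | h | h | h <;> subst h <;> exact Subtype.coe_prop _
    · -- adjacency characterization
      have key : ∀ i j : Fin 4, G'.Adj (f i) (f j) ↔ diamond.Adj i j := by
        intro i j
        rw [← Subgraph.coe_adj]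
        exact e.symm.map_rel_iff
      intro x y
      constructor
      · intro hxy
        have hx : x ∈ G'.verts := G'.edge_vert hxy
        have hy : y ∈ G'.verts := G'.edge_vert hxy.symm
        have hmem : ∀ w (hw : w ∈ G'.verts), w = f 0 ∨ w = f 1 ∨ w = f 2 ∨ w = f 3 := by
          intro w hw
          have h4 : ∀ i : Fin 4, i = 0 ∨ i = 1 ∨ i = 2 ∨ i = 3 := by decide
          have hw' : (⟨w, hw⟩ : ↥G'.verts) = e.symm (e ⟨w, hw⟩) := (e.symm_apply_apply _).symm
          rcases h4 (e ⟨w, hw⟩) with h | h | h | h <;> rw [h] at hw' <;>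
            [exact Or.inl (congrArg Subtype.val hw');
             exact Or.inr (Or.inl (congrArg Subtype.val hw'));
             exact Or.inr (Or.inr (Or.inl (congrArg Subtype.val hw')));
             exact Or.inr (Or.inr (Or.inr (congrArg Subtype.val hw')))]
        refine ⟨hmem x hx, hmem y hy, hxy.ne, ?_, ?_⟩
        · rintro ⟨rfl, rfl⟩
          have := (key 0 1).mp hxy
          exact absurd this (by decide)
        · rintro ⟨rfl, rfl⟩
          have := (key 1 0).mp hxy
          exact absurd this (by decide)
      · rintro ⟨hx, hy, hne, h01, h10⟩
        rcases hx with rfl | rfl | rfl | rfl <;> rcases hy with rfl | rfl | rfl | rfl <;>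
          first
            | exact absurd rfl hne
            | (exfalso; apply h01; constructor <;> rfl)
            | (exfalso; apply h10; constructor <;> rfl)
            | exact (key 0 2).mpr (by decide)
            | exact (key 0 3).mpr (by decide)
            | exact (key 1 2).mpr (by decide)
            | exact (key 1 3).mpr (by decide)
            | exact (key 2 0).mpr (by decide)
            | exact (key 2 1).mpr (by decide)
            | exact (key 2 3).mpr (by decide)
            | exact (key 3 0).mpr (by decide)
            | exact (key 3 1).mpr (by decide)
            | exact (key 3 2).mpr (by decide)
  · rintro ⟨p, q, r, s, hpq, hpr, hps, hqr, hqs, hrs, hverts, hAdj⟩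
    have hmem : ∀ w, w ∈ ({p,q,r,s} : Set V) → w ∈ G'.verts := by rw [hverts]; exact fun _ h => h
    set g : Fin 4 → ↥G'.verts := fun i =>
      ⟨![p, q, r, s] i, by fin_cases i <;> apply hmem <;> simp⟩ with hg
    have hginj : Function.Injective g := by
      intro i j hij
      have : (![p, q, r, s] i : V) = ![p, q, r, s] j := congrArg Subtype.val hij
      fin_cases i <;> fin_cases j <;> simp_all
    have hgsurj : Function.Surjective g := by
      rintro ⟨w, hw⟩
      rw [hverts] at hw
      rcases hw with rfl | rfl | rfl | rfl
      exacts [⟨0, rfl⟩, ⟨1, rfl⟩, ⟨2, rfl⟩, ⟨3, rfl⟩]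
    refine ⟨(RelIso.mk (Equiv.ofBijective g ⟨hginj, hgsurj⟩) ?_ : diamond ≃g G'.coe).symm⟩
    intro i j
    show G'.coe.Adj (g i) (g j) ↔ diamond.Adj i j
    rw [Subgraph.coe_adj, hAdj]
    fin_cases i <;> fin_cases j <;>
      simp_all [patAdj, diamond_adj, g, hpq.symm, hpr.symm, hps.symm, hqr.symm, hqs.symm, hrs.symm]
/-- Build a diamond-copy subgraph from a pattern of 5 adjacencies. -/
def pattSub (G : SimpleGraph V) (p q r s : V)
    (hpq : p ≠ q) (hpr : p ≠ r) (hps : p ≠ s) (hqr : q ≠ r) (hqs : q ≠ s) (hrs : r ≠ s)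
    (apr : G.Adj p r) (aps : G.Adj p s) (aqr : G.Adj q r) (aqs : G.Adj q s) (ars : G.Adj r s) :
    G.Subgraph where
  verts := {p, q, r, s}
  Adj := patAdj p q r s
  adj_sub := by
    rintro x y ⟨hx, hy, hne, h01, h10⟩
    rcases hx with rfl | rfl | rfl | rfl <;> rcases hy with rfl | rfl | rfl | rfl <;>
      first
        | exact absurd rfl hne
        | (exfalso; apply h01; constructor <;> rfl)
        | (exfalso; apply h10; constructor <;> rfl)
        | exact apr | exact aps | exact aqr | exact aqs | exact ars
        | exact apr.symm | exact aps.symm | exact aqr.symm | exact aqs.symm | exact ars.symm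
  edge_vert := by
    rintro x y ⟨hx, hy, hne, h01, h10⟩
    rcases hx with rfl | rfl | rfl | rfl <;> simp
  symm := ⟨fun x y h => patAdj_symm h⟩

lemma pattSub_isCopy (G : SimpleGraph V) (p q r s : V)
    (hpq : p ≠ q) (hpr : p ≠ r) (hps : p ≠ s) (hqr : q ≠ r) (hqs : q ≠ s) (hrs : r ≠ s)
    (apr : G.Adj p r) (aps : G.Adj p s) (aqr : G.Adj q r) (aqs : G.Adj q s) (ars : G.Adj r s) :
    IsCopy diamond (pattSub G p q r s hpq hpr hps hqr hqs hrs apr aps aqr aqs ars) :=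
  (iscopy_iff _).mpr ⟨p, q, r, s, hpq, hpr, hps, hqr, hqs, hrs, rfl, fun _ _ => Iff.rfl⟩

/-- A diamond-free graph has no 5-edge diamond pattern at all. -/
lemma no_patt (hfree : ∀ G' : G.Subgraph, ¬ IsCopy diamond G') {p q r s : V}
    (hpq : p ≠ q) (hpr : p ≠ r) (hps : p ≠ s) (hqr : q ≠ r) (hqs : q ≠ s) (hrs : r ≠ s)
    (apr : G.Adj p r) (aps : G.Adj p s) (aqr : G.Adj q r) (aqs : G.Adj q s) (ars : G.Adj r s) :
    False :=
  hfree _ (pattSub_isCopy G p q r s hpq hpr hps hqr hqs hrs apr aps aqr aqs ars)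

lemma H_adj {u v : V} (hne : u ≠ v) (x y : V) :
    (G ⊔ SimpleGraph.fromEdgeSet {s(u, v)}).Adj x y ↔
      G.Adj x y ∨ ((x = u ∧ y = v) ∨ (x = v ∧ y = u)) := by
  rw [sup_adj, fromEdgeSet_adj]
  simp only [Set.mem_singleton_iff, Sym2.eq_iff]
  constructor
  · rintro (h | ⟨h, -⟩)
    · exact Or.inl h
    · exact Or.inr h
  · rintro (h | h)
    · exact Or.inl h
    · refine Or.inr ⟨h, ?_⟩
      rcases h with ⟨rfl, rfl⟩ | ⟨rfl, rfl⟩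
      · exact hne
      · exact hne.symm
/-- a diamond copy yields five ambient adjacencies on four distinct vertices -/
lemma copy_patt {G' : G.Subgraph} (h : IsCopy diamond G') :
    ∃ p q r s : V, (p ≠ q ∧ p ≠ r ∧ p ≠ s ∧ q ≠ r ∧ q ≠ s ∧ r ≠ s) ∧
      G.Adj p r ∧ G.Adj p s ∧ G.Adj q r ∧ G.Adj q s ∧ G.Adj r s := by
  rw [iscopy_iff] at h
  obtain ⟨p, q, r, s, hpq, hpr, hps, hqr, hqs, hrs, hverts, hAdj⟩ := h
  refine ⟨p, q, r, s, ⟨hpq, hpr, hps, hqr, hqs, hrs⟩, ?_, ?_, ?_, ?_, ?_⟩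
  · exact G'.adj_sub ((hAdj p r).mpr
      ⟨Or.inl rfl, Or.inr (Or.inr (Or.inl rfl)), hpr, fun h => hqr h.2.symm, fun h => hpq h.1⟩)
  · exact G'.adj_sub ((hAdj p s).mpr
      ⟨Or.inl rfl, Or.inr (Or.inr (Or.inr rfl)), hps, fun h => hqs h.2.symm, fun h => hpq h.1⟩)
  · exact G'.adj_sub ((hAdj q r).mpr
      ⟨Or.inr (Or.inl rfl), Or.inr (Or.inr (Or.inl rfl)), hqr, fun h => hpq h.1.symm,
        fun h => hpr h.2.symm⟩)
  · exact G'.adj_sub ((hAdj q s).mpr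
      ⟨Or.inr (Or.inl rfl), Or.inr (Or.inr (Or.inr rfl)), hqs, fun h => hpq h.1.symm,
        fun h => hps h.2.symm⟩)
  · exact G'.adj_sub ((hAdj r s).mpr
      ⟨Or.inr (Or.inr (Or.inl rfl)), Or.inr (Or.inr (Or.inr rfl)), hrs, fun h => hpr h.1.symm,
        fun h => hqr h.1.symm⟩)

def Chord (G : SimpleGraph V) (u v : V) : Prop :=
  ∃ x y, x ≠ y ∧ G.Adj u x ∧ G.Adj u y ∧ G.Adj v x ∧ G.Adj v y

def Side (G : SimpleGraph V) (u v : V) : Prop :=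
  ∃ x y, G.Adj v x ∧ G.Adj v y ∧ G.Adj x y ∧ G.Adj u y ∧ u ≠ x

/-- Adding any non-edge to a diamond-free graph which creates a diamond creates it in one of
two ways. -/
lemma create (hfree : ∀ G' : G.Subgraph, ¬ IsCopy diamond G') {u v : V} (hne : u ≠ v)
    (hex : ∃ G' : (G ⊔ SimpleGraph.fromEdgeSet {s(u, v)}).Subgraph, IsCopy diamond G') :
    Chord G u v ∨ Side G u v ∨ Side G v u := by
  obtain ⟨C, hC⟩ := hex
  rw [iscopy_iff] at hC
  obtain ⟨p, q, r, s, hpq, hpr, hps, hqr, hqs, hrs, hverts, hAdj⟩ := hC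
  have hadj : ∀ x y : V, patAdj p q r s x y →
      (G ⊔ SimpleGraph.fromEdgeSet {s(u, v)}).Adj x y :=
    fun x y h => C.adj_sub ((hAdj x y).mpr h)
  have h1 := (H_adj hne p r).mp (hadj p r
    ⟨Or.inl rfl, Or.inr (Or.inr (Or.inl rfl)), hpr, fun h => hqr h.2.symm, fun h => hpq h.1⟩)
  have h2 := (H_adj hne p s).mp (hadj p s
    ⟨Or.inl rfl, Or.inr (Or.inr (Or.inr rfl)), hps, fun h => hqs h.2.symm, fun h => hpq h.1⟩)
  have h3 := (H_adj hne q r).mp (hadj q r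
    ⟨Or.inr (Or.inl rfl), Or.inr (Or.inr (Or.inl rfl)), hqr, fun h => hpq h.1.symm,
      fun h => hpr h.2.symm⟩)
  have h4 := (H_adj hne q s).mp (hadj q s
    ⟨Or.inr (Or.inl rfl), Or.inr (Or.inr (Or.inr rfl)), hqs, fun h => hpq h.1.symm,
      fun h => hps h.2.symm⟩)
  have h5 := (H_adj hne r s).mp (hadj r s
    ⟨Or.inr (Or.inr (Or.inl rfl)), Or.inr (Or.inr (Or.inr rfl)), hrs, fun h => hpr h.1.symm,
      fun h => hqr h.1.symm⟩)
  rcases h1 with g1 | hn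
  · rcases h2 with g2 | hn
    · rcases h3 with g3 | hn
      · rcases h4 with g4 | hn
        · rcases h5 with g5 | hn
          · exact (no_patt hfree hpq hpr hps hqr hqs hrs g1 g2 g3 g4 g5).elim
          · rcases hn with ⟨rfl, rfl⟩ | ⟨rfl, rfl⟩
            · exact Or.inl ⟨p, q, hpq, g1.symm, g3.symm, g2.symm, g4.symm⟩
            · exact Or.inl ⟨p, q, hpq, g2.symm, g4.symm, g1.symm, g3.symm⟩
        · rcases hn with ⟨rfl, rfl⟩ | ⟨rfl, rfl⟩ <;>
            [skip; skip] <;> (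
          replace h5 := h5.resolve_right (by
            rintro (⟨h, h'⟩ | ⟨h, h'⟩) <;>
                    first
                      | exact absurd h (by assumption)
                      | exact absurd h.symm (by assumption)
                      | exact absurd h' (by assumption)
                      | exact absurd h'.symm (by assumption))
          first
            | exact Or.inr (Or.inl ⟨p, r, g2.symm, h5.symm, g1, g3, hpq.symm⟩)
            | exact Or.inr (Or.inr ⟨p, r, g2.symm, h5.symm, g1, g3, hpq.symm⟩))
      · rcases hn with ⟨rfl, rfl⟩ | ⟨rfl, rfl⟩ <;> (
        replace h4 := h4.resolve_right (by
          rintro (⟨h, h'⟩ | ⟨h, h'⟩) <;>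
                first
                  | exact absurd h (by assumption)
                  | exact absurd h.symm (by assumption)
                  | exact absurd h' (by assumption)
                  | exact absurd h'.symm (by assumption))
        replace h5 := h5.resolve_right (by
          rintro (⟨h, h'⟩ | ⟨h, h'⟩) <;>
                first
                  | exact absurd h (by assumption)
                  | exact absurd h.symm (by assumption)
                  | exact absurd h' (by assumption)
                  | exact absurd h'.symm (by assumption))
        first
          | exact Or.inr (Or.inl ⟨p, s, g1.symm, h5, g2, h4, hpq.symm⟩)
          | exact Or.inr (Or.inr ⟨p, s, g1.symm, h5, g2, h4, hpq.symm⟩))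
    · rcases hn with ⟨rfl, rfl⟩ | ⟨rfl, rfl⟩ <;> (
      replace h3 := h3.resolve_right (by
        rintro (⟨h, h'⟩ | ⟨h, h'⟩) <;>
            first
              | exact absurd h (by assumption)
              | exact absurd h.symm (by assumption)
              | exact absurd h' (by assumption)
              | exact absurd h'.symm (by assumption))
      replace h4 := h4.resolve_right (by
        rintro (⟨h, h'⟩ | ⟨h, h'⟩) <;>
            first
              | exact absurd h (by assumption)
              | exact absurd h.symm (by assumption)
              | exact absurd h' (by assumption)
              | exact absurd h'.symm (by assumption))
      replace h5 := h5.resolve_right (by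
        rintro (⟨h, h'⟩ | ⟨h, h'⟩) <;>
            first
              | exact absurd h (by assumption)
              | exact absurd h.symm (by assumption)
              | exact absurd h' (by assumption)
              | exact absurd h'.symm (by assumption))
      first
        | exact Or.inr (Or.inl ⟨q, r, h4.symm, h5.symm, h3, g1, hpq⟩)
        | exact Or.inr (Or.inr ⟨q, r, h4.symm, h5.symm, h3, g1, hpq⟩))
  · rcases hn with ⟨rfl, rfl⟩ | ⟨rfl, rfl⟩ <;> (
    replace h2 := h2.resolve_right (by
      rintro (⟨h, h'⟩ | ⟨h, h'⟩) <;>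
        first
          | exact absurd h (by assumption)
          | exact absurd h.symm (by assumption)
          | exact absurd h' (by assumption)
          | exact absurd h'.symm (by assumption))
    replace h3 := h3.resolve_right (by
      rintro (⟨h, h'⟩ | ⟨h, h'⟩) <;>
        first
          | exact absurd h (by assumption)
          | exact absurd h.symm (by assumption)
          | exact absurd h' (by assumption)
          | exact absurd h'.symm (by assumption))
    replace h4 := h4.resolve_right (by
      rintro (⟨h, h'⟩ | ⟨h, h'⟩) <;>
        first
          | exact absurd h (by assumption)
          | exact absurd h.symm (by assumption)
          | exact absurd h' (by assumption)
          | exact absurd h'.symm (by assumption))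
    replace h5 := h5.resolve_right (by
      rintro (⟨h, h'⟩ | ⟨h, h'⟩) <;>
        first
          | exact absurd h (by assumption)
          | exact absurd h.symm (by assumption)
          | exact absurd h' (by assumption)
          | exact absurd h'.symm (by assumption))
    first
      | exact Or.inr (Or.inl ⟨q, s, h3.symm, h5, h4, h2, hpq⟩)
      | exact Or.inr (Or.inr ⟨q, s, h3.symm, h5, h4, h2, hpq⟩))
/-- Two nonadjacent vertices cannot have three common neighbours. -/
lemma no_three_commons
    (hu : ∃! G' : (G ⊔ SimpleGraph.fromEdgeSet {s(u, v)}).Subgraph, IsCopy diamond G')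
    (hne : u ≠ v) {x y z : V} (hxy : x ≠ y) (hxz : x ≠ z) (hyz : y ≠ z)
    (aux : G.Adj u x) (avx : G.Adj v x) (auy : G.Adj u y) (avy : G.Adj v y)
    (auz : G.Adj u z) (avz : G.Adj v z) : False := by
  set H := G ⊔ SimpleGraph.fromEdgeSet {s(u, v)} with hH
  have lift : ∀ {a b : V}, G.Adj a b → H.Adj a b := fun h => (H_adj hne _ _).mpr (Or.inl h)
  have hnew : H.Adj u v := (H_adj hne u v).mpr (Or.inr (Or.inl ⟨rfl, rfl⟩))
  have C1 := pattSub_isCopy H x y u v hxy aux.ne' avx.ne' auy.ne' avy.ne' hne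
    (lift aux.symm) (lift avx.symm) (lift auy.symm) (lift avy.symm) hnew
  have C2 := pattSub_isCopy H x z u v hxz aux.ne' avx.ne' auz.ne' avz.ne' hne
    (lift aux.symm) (lift avx.symm) (lift auz.symm) (lift avz.symm) hnew
  have := (hu.unique C1 C2)
  have hv := congrArg SimpleGraph.Subgraph.verts this
  simp only [pattSub] at hv
  have : y ∈ ({x, z, u, v} : Set V) := by
    rw [← hv]; exact Or.inr (Or.inl rfl)
  rcases this with h | h | h | h
  · exact hxy h.symm
  · exact hyz h
  · exact auy.ne' h
  · exact avy.ne' h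

/-- Data of the (unique) triangle. -/
def TriData (G : SimpleGraph V) (a b c : V) : Prop :=
  a ≠ b ∧ a ≠ c ∧ b ≠ c ∧ G.Adj a b ∧ G.Adj a c ∧ G.Adj b c ∧
    ∀ x y z : V, x ≠ y → x ≠ z → y ≠ z → G.Adj x y → G.Adj x z → G.Adj y z →
      ((x = a ∨ x = b ∨ x = c) ∧ (y = a ∨ y = b ∨ y = c) ∧ (z = a ∨ z = b ∨ z = c))

lemma TriData.rot {a b c : V} (h : TriData G a b c) : TriData G b c a := by
  obtain ⟨h1, h2, h3, h4, h5, h6, h7⟩ := h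
  exact ⟨h3, h1.symm, h2.symm, h6, h4.symm, h5.symm,
    fun x y z hxy hxz hyz a1 a2 a3 => by
      obtain ⟨m1, m2, m3⟩ := h7 x y z hxy hxz hyz a1 a2 a3; tauto⟩

lemma TriData.swap {a b c : V} (h : TriData G a b c) : TriData G a c b := by
  obtain ⟨h1, h2, h3, h4, h5, h6, h7⟩ := h
  exact ⟨h2, h1, h3.symm, h5, h4, h6.symm,
    fun x y z hxy hxz hyz a1 a2 a3 => by
      obtain ⟨m1, m2, m3⟩ := h7 x y z hxy hxz hyz a1 a2 a3; tauto⟩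

/-- The pendant lemma: if `v ∉ {a,b,c}` is adjacent to `a` then the only common neighbour of
`v` and `b` is `a`. -/
lemma pendant {a b c : V} (td : TriData G a b c)
    (hsat : ∀ u v : V, u ≠ v → ¬ G.Adj u v →
      ∃! G' : (G ⊔ SimpleGraph.fromEdgeSet {s(u, v)}).Subgraph, IsCopy diamond G')
    {v : V} (hva : v ≠ a) (hvb : v ≠ b) (hvc : v ≠ c) (hadj : G.Adj v a)
    {w : V} (hw1 : G.Adj v w) (hw2 : G.Adj w b) : w = a := by
  obtain ⟨hab, hac, hbc, aab, aac, abc, uniq⟩ := td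
  by_contra hwa
  -- v is not adjacent to b nor c
  have hnvb : ¬ G.Adj v b := fun h => by
    have := (uniq v a b hva hvb hab hadj h aab).1; tauto
  have hnvc : ¬ G.Adj v c := fun h => by
    have := (uniq v a c hva hvc hac hadj h aac).1; tauto
  have hwc : w ≠ c := fun h => hnvc (h ▸ hw1)
  set H := G ⊔ SimpleGraph.fromEdgeSet {s(v, b)} with hH
  have lift : ∀ {x y : V}, G.Adj x y → H.Adj x y := fun h => (H_adj hvb _ _).mpr (Or.inl h)
  have hnew : H.Adj v b := (H_adj hvb v b).mpr (Or.inr (Or.inl ⟨rfl, rfl⟩))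
  have C1 := pattSub_isCopy H v c a b hvc hva hvb (fun h => hac h.symm) (fun h => hbc h.symm) hab
    (lift hadj) hnew (lift aac.symm) (lift abc.symm) (lift aab)
  have C2 := pattSub_isCopy H a w v b (fun h => hwa h.symm) hva.symm hab hw1.ne' hw2.ne hvb
    (lift hadj.symm) (lift aab) (lift hw1.symm) (lift hw2) hnew
  have heq := (hsat v b hvb hnvb).unique C1 C2
  have hv := congrArg SimpleGraph.Subgraph.verts heq
  simp only [pattSub] at hv
  have : c ∈ ({a, w, v, b} : Set V) := by
    rw [← hv]; exact Or.inr (Or.inl rfl)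
  rcases this with h | h | h | h
  · exact hac h.symm
  · exact hwc h.symm
  · exact hvc h.symm
  · exact hbc h.symm
lemma side_mem {a b c : V} (td : TriData G a b c) {u v : V} (h : Side G u v) :
    (v = a ∨ v = b ∨ v = c) ∧ ∃ y, (y = a ∨ y = b ∨ y = c) ∧ G.Adj u y ∧ G.Adj v y := by
  obtain ⟨x, y, avx, avy, axy, auy, hux⟩ := h
  obtain ⟨m1, m2, m3⟩ := td.2.2.2.2.2.2 v x y avx.ne avy.ne axy.ne avx avy axy
  exact ⟨m1, y, m3, auy, avy⟩

lemma pend_not {a b c : V} (td : TriData G a b c) {v : V}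
    (hva : v ≠ a) (hvb : v ≠ b) (hvc : v ≠ c) (hadj : G.Adj v a) : ¬ G.Adj v b := fun h => by
  have := (td.2.2.2.2.2.2 v a b hva hvb td.1 hadj h td.2.2.2.1).1; tauto

/-- classification of neighbours of a pendant vertex -/
lemma step3 {a b c : V} (td : TriData G a b c)
    (hsat : ∀ u v : V, u ≠ v → ¬ G.Adj u v →
      ∃! G' : (G ⊔ SimpleGraph.fromEdgeSet {s(u, v)}).Subgraph, IsCopy diamond G')
    {v : V} (hva : v ≠ a) (hvb : v ≠ b) (hvc : v ≠ c) (hadj : G.Adj v a)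
    {w : V} (hvw : G.Adj v w) (hwa : w ≠ a) :
    (w ≠ b ∧ w ≠ c) ∧ ¬ G.Adj w a ∧ ¬ G.Adj w b ∧ ¬ G.Adj w c := by
  have hnvb : ¬ G.Adj v b := pend_not td hva hvb hvc hadj
  have hnvc : ¬ G.Adj v c := pend_not td.swap hva hvc hvb hadj
  have hwb : w ≠ b := fun h => hnvb (h ▸ hvw)
  have hwc : w ≠ c := fun h => hnvc (h ▸ hvw)
  refine ⟨⟨hwb, hwc⟩, ?_, ?_, ?_⟩
  · intro h
    have := (td.2.2.2.2.2.2 v w a hvw.ne hva hwa hvw hadj h).1; tauto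
  · exact fun h => hwa (pendant td hsat hva hvb hvc hadj hvw h)
  · exact fun h => hwa (pendant td.swap hsat hva hvc hvb hadj hvw h)

/-- two nonadjacent vertices outside the triangle have exactly two common neighbours -/
lemma commons_two_outside {a b c : V} (td : TriData G a b c)
    (hfree : ∀ G' : G.Subgraph, ¬ IsCopy diamond G')
    (hsat : ∀ u v : V, u ≠ v → ¬ G.Adj u v →
      ∃! G' : (G ⊔ SimpleGraph.fromEdgeSet {s(u, v)}).Subgraph, IsCopy diamond G')
    {u v : V} (hne : u ≠ v) (hnadj : ¬ G.Adj u v)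
    (hu : u ≠ a ∧ u ≠ b ∧ u ≠ c) (hv : v ≠ a ∧ v ≠ b ∧ v ≠ c) :
    ∃ x y, x ≠ y ∧ G.Adj u x ∧ G.Adj u y ∧ G.Adj v x ∧ G.Adj v y ∧
      ∀ z, G.Adj u z → G.Adj v z → z = x ∨ z = y := by
  obtain ⟨C, hC, -⟩ := hsat u v hne hnadj
  rcases create hfree hne ⟨C, hC⟩ with h | h | h
  · obtain ⟨x, y, hxy, a1, a2, a3, a4⟩ := h
    refine ⟨x, y, hxy, a1, a2, a3, a4, fun z hz1 hz2 => ?_⟩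
    by_contra hcon
    push_neg at hcon
    exact no_three_commons (hsat u v hne hnadj) hne hxy hcon.1.symm hcon.2.symm a1 a3 a2 a4 hz1 hz2
  · have := (side_mem td h).1; tauto
  · have := (side_mem td h).1; tauto

/-- a vertex adjacent to none of the triangle, vs. a triangle vertex: exactly two commons -/
lemma commons_two_B {a b c : V} (td : TriData G a b c)
    (hfree : ∀ G' : G.Subgraph, ¬ IsCopy diamond G')
    (hsat : ∀ u v : V, u ≠ v → ¬ G.Adj u v →
      ∃! G' : (G ⊔ SimpleGraph.fromEdgeSet {s(u, v)}).Subgraph, IsCopy diamond G')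
    {v : V} (hva : v ≠ a) (hnva : ¬ G.Adj v a) (hnvb : ¬ G.Adj v b) (hnvc : ¬ G.Adj v c) :
    ∃ x y, x ≠ y ∧ G.Adj v x ∧ G.Adj v y ∧ G.Adj a x ∧ G.Adj a y ∧
      ∀ z, G.Adj v z → G.Adj a z → z = x ∨ z = y := by
  obtain ⟨C, hC, -⟩ := hsat v a hva hnva
  rcases create hfree hva ⟨C, hC⟩ with h | h | h
  · obtain ⟨x, y, hxy, a1, a2, a3, a4⟩ := h
    refine ⟨x, y, hxy, a1, a2, a3, a4, fun z hz1 hz2 => ?_⟩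
    by_contra hcon
    push_neg at hcon
    exact no_three_commons (hsat v a hva hnva) hva hxy hcon.1.symm hcon.2.symm a1 a3 a2 a4 hz1 hz2
  · obtain ⟨-, y, hy, h1, h2⟩ := side_mem td h
    rcases hy with rfl | rfl | rfl
    · exact (hnva h1).elim
    · exact (hnvb h1).elim
    · exact (hnvc h1).elim
  · have hvb : v ≠ b := fun h' => hnva (h' ▸ td.2.2.2.1.symm)
    have hvc : v ≠ c := fun h' => hnva (h' ▸ td.2.2.2.2.1.symm)
    have := (side_mem td h).1; tauto
lemma double_count {α β : Type*} (s : Finset α) (t : Finset β)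
    (r : α → β → Prop) [∀ a b, Decidable (r a b)] :
    ∑ a ∈ s, (t.filter (r a)).card = ∑ b ∈ t, (s.filter (fun a => r a b)).card := by
  simp_rw [Finset.card_filter]
  exact Finset.sum_comm

lemma count_rel [Fintype V] [DecidableEq V] [DecidableRel G.Adj] {a b c : V}
    (td : TriData G a b c)
    (hfree : ∀ G' : G.Subgraph, ¬ IsCopy diamond G')
    (hsat : ∀ u v : V, u ≠ v → ¬ G.Adj u v →
      ∃! G' : (G ⊔ SimpleGraph.fromEdgeSet {s(u, v)}).Subgraph, IsCopy diamond G')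
    (hBx : ∃ v, (v ≠ a ∧ v ≠ b ∧ v ≠ c) ∧ ¬ G.Adj v a ∧ ¬ G.Adj v b ∧ ¬ G.Adj v c) :
    2 ≤ (Finset.univ.filter fun x => (x ≠ a ∧ x ≠ b ∧ x ≠ c) ∧ G.Adj x a).card ∧
      (Finset.univ.filter fun x => (x ≠ a ∧ x ≠ b ∧ x ≠ c) ∧ G.Adj x b).card
        = (Finset.univ.filter fun x => (x ≠ a ∧ x ≠ b ∧ x ≠ c) ∧ G.Adj x a).card - 1 := by
  obtain ⟨hab, hac, hbc, aab, aac, abc, uniq⟩ := id td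
  set Aa : Finset V := Finset.univ.filter (fun x => (x ≠ a ∧ x ≠ b ∧ x ≠ c) ∧ G.Adj x a) with hAa
  set Ab : Finset V := Finset.univ.filter (fun x => (x ≠ a ∧ x ≠ b ∧ x ≠ c) ∧ G.Adj x b) with hAb
  set Bs : Finset V := Finset.univ.filter
    (fun x => (x ≠ a ∧ x ≠ b ∧ x ≠ c) ∧ ¬ G.Adj x a ∧ ¬ G.Adj x b ∧ ¬ G.Adj x c) with hBs
  have memAa : ∀ {x}, x ∈ Aa ↔ ((x ≠ a ∧ x ≠ b ∧ x ≠ c) ∧ G.Adj x a) := by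
    intro x; simp [hAa]
  have memAb : ∀ {x}, x ∈ Ab ↔ ((x ≠ a ∧ x ≠ b ∧ x ≠ c) ∧ G.Adj x b) := by
    intro x; simp [hAb]
  have memBs : ∀ {x}, x ∈ Bs ↔
      ((x ≠ a ∧ x ≠ b ∧ x ≠ c) ∧ ¬ G.Adj x a ∧ ¬ G.Adj x b ∧ ¬ G.Adj x c) := by
    intro x; simp [hBs]
  -- any neighbour of an `Aa` vertex other than `a` is in `Bs`
  have step3a : ∀ {u z}, u ∈ Aa → G.Adj u z → z ≠ a → z ∈ Bs := by
    intro u z hu hz hza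
    obtain ⟨⟨ua, ub, uc⟩, uadj⟩ := memAa.mp hu
    obtain ⟨⟨zb, zc⟩, n1, n2, n3⟩ := step3 td hsat ua ub uc uadj hz hza
    exact memBs.mpr ⟨⟨hza, zb, zc⟩, n1, n2, n3⟩
  have step3b : ∀ {u z}, u ∈ Ab → G.Adj u z → z ≠ b → z ∈ Bs := by
    intro u z hu hz hzb
    obtain ⟨⟨ua, ub, uc⟩, uadj⟩ := memAb.mp hu
    obtain ⟨⟨zc, za⟩, n1, n2, n3⟩ := step3 td.rot hsat ub uc ua uadj hz hzb
    exact memBs.mpr ⟨⟨za, hzb, zc⟩, n3, n1, n2⟩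
  -- `Aa` vertices are adjacent only to `a` among the triangle
  have notb : ∀ {u}, u ∈ Aa → ¬ G.Adj u b := by
    intro u hu
    obtain ⟨⟨ua, ub, uc⟩, uadj⟩ := memAa.mp hu
    exact pend_not td ua ub uc uadj
  have notb' : ∀ {u}, u ∈ Ab → ¬ G.Adj u a := by
    intro u hu
    obtain ⟨⟨ua, ub, uc⟩, uadj⟩ := memAb.mp hu
    exact pend_not td.rot.swap ub ua uc uadj
  -- N1 : each B-vertex has exactly two neighbours in Aa
  have N1 : ∀ w ∈ Bs, ∃ x y, x ≠ y ∧ Aa.filter (fun u => G.Adj w u) = {x, y} := by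
    intro w hw
    obtain ⟨⟨hwa, hwb, hwc⟩, nwa, nwb, nwc⟩ := memBs.mp hw
    obtain ⟨x, y, hxy, wx, wy, ax, ay, huniq⟩ := commons_two_B td hfree hsat hwa nwa nwb nwc
    refine ⟨x, y, hxy, ?_⟩
    ext u
    simp only [Finset.mem_filter, Finset.mem_insert, Finset.mem_singleton]
    constructor
    · rintro ⟨hu, wu⟩
      exact huniq u wu (memAa.mp hu).2.symm
    · rintro (rfl | rfl)
      · exact ⟨memAa.mpr ⟨⟨ax.ne', fun h => nwb (h ▸ wx), fun h => nwc (h ▸ wx)⟩, ax.symm⟩, wx⟩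
      · exact ⟨memAa.mpr ⟨⟨ay.ne', fun h => nwb (h ▸ wy), fun h => nwc (h ▸ wy)⟩, ay.symm⟩, wy⟩
  have N2 : ∀ w ∈ Bs, ∃ x y, x ≠ y ∧ Ab.filter (fun u => G.Adj w u) = {x, y} := by
    intro w hw
    obtain ⟨⟨hwa, hwb, hwc⟩, nwa, nwb, nwc⟩ := memBs.mp hw
    obtain ⟨x, y, hxy, wx, wy, bx, by', huniq⟩ := commons_two_B td.rot hfree hsat hwb nwb nwc nwa
    refine ⟨x, y, hxy, ?_⟩
    ext u
    simp only [Finset.mem_filter, Finset.mem_insert, Finset.mem_singleton]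
    constructor
    · rintro ⟨hu, wu⟩
      exact huniq u wu (memAb.mp hu).2.symm
    · rintro (rfl | rfl)
      · exact ⟨memAb.mpr ⟨⟨fun h => nwa (h ▸ wx), bx.ne', fun h => nwc (h ▸ wx)⟩, bx.symm⟩, wx⟩
      · exact ⟨memAb.mpr ⟨⟨fun h => nwa (h ▸ wy), by'.ne', fun h => nwc (h ▸ wy)⟩, by'.symm⟩, wy⟩
  have cardN1 : ∀ w ∈ Bs, (Aa.filter (fun u => G.Adj w u)).card = 2 := by
    intro w hw
    obtain ⟨x, y, hxy, heq⟩ := N1 w hw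
    rw [heq, Finset.card_insert_of_notMem (by simp [hxy]), Finset.card_singleton]
  have cardN2 : ∀ w ∈ Bs, (Ab.filter (fun u => G.Adj w u)).card = 2 := by
    intro w hw
    obtain ⟨x, y, hxy, heq⟩ := N2 w hw
    rw [heq, Finset.card_insert_of_notMem (by simp [hxy]), Finset.card_singleton]
  -- N4 : distinct Aa vertices have a unique common neighbour in Bs
  have N4 : ∀ u u', u ∈ Aa → u' ∈ Aa → u ≠ u' →
      ∃ z, Bs.filter (fun w => G.Adj w u ∧ G.Adj w u') = {z} := by
    intro u u' hu hu' hne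
    obtain ⟨⟨ua, ub, uc⟩, uadj⟩ := memAa.mp hu
    obtain ⟨⟨u'a, u'b, u'c⟩, u'adj⟩ := memAa.mp hu'
    have hnadj : ¬ G.Adj u u' := fun h => by
      have := (uniq u u' a hne ua u'a h uadj u'adj).1; tauto
    obtain ⟨x, y, hxy, ux, uy, u'x, u'y, hcl⟩ :=
      commons_two_outside td hfree hsat hne hnadj ⟨ua, ub, uc⟩ ⟨u'a, u'b, u'c⟩
    have hax : a = x ∨ a = y := hcl a uadj u'adj
    have key : ∀ z, z ≠ a → G.Adj u z → G.Adj u' z → Bs.filter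
        (fun w => G.Adj w u ∧ G.Adj w u') = {z} → True := fun _ _ _ _ _ => trivial
    rcases hax with rfl | rfl
    · -- a = x, take z := y
      refine ⟨y, ?_⟩
      have hya : y ≠ a := fun h => hxy h.symm
      ext w
      simp only [Finset.mem_filter, Finset.mem_singleton]
      constructor
      · rintro ⟨hw, w1, w2⟩
        rcases hcl w w1.symm w2.symm with rfl | rfl
        · exact absurd (memBs.mp hw).1.1 (by simp)
        · rfl
      · rintro rfl
        exact ⟨step3a hu uy hya, uy.symm, u'y.symm⟩
    · -- a = y, take z := x
      refine ⟨x, ?_⟩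
      have hxa : x ≠ a := hxy
      ext w
      simp only [Finset.mem_filter, Finset.mem_singleton]
      constructor
      · rintro ⟨hw, w1, w2⟩
        rcases hcl w w1.symm w2.symm with rfl | rfl
        · rfl
        · exact absurd (memBs.mp hw).1.1 (by simp)
      · rintro rfl
        exact ⟨step3a hu ux hxa, ux.symm, u'x.symm⟩
  -- N3 : cross pairs have exactly two common neighbours, both in Bs
  have N3 : ∀ u u', u ∈ Aa → u' ∈ Ab →
      (Bs.filter (fun w => G.Adj w u ∧ G.Adj w u')).card = 2 := by
    intro u u' hu hu'
    obtain ⟨⟨ua, ub, uc⟩, uadj⟩ := memAa.mp hu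
    obtain ⟨⟨u'a, u'b, u'c⟩, u'adj⟩ := memAb.mp hu'
    have hne : u ≠ u' := fun h => notb hu (h ▸ u'adj)
    have hnadj : ¬ G.Adj u u' := fun h =>
      (step3 td hsat ua ub uc uadj h u'a).2.2.1 u'adj
    obtain ⟨x, y, hxy, ux, uy, u'x, u'y, hcl⟩ :=
      commons_two_outside td hfree hsat hne hnadj ⟨ua, ub, uc⟩ ⟨u'a, u'b, u'c⟩
    have hxa : x ≠ a := fun h => notb' hu' (h ▸ u'x)
    have hya : y ≠ a := fun h => notb' hu' (h ▸ u'y)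
    have heq : Bs.filter (fun w => G.Adj w u ∧ G.Adj w u') = {x, y} := by
      ext w
      simp only [Finset.mem_filter, Finset.mem_insert, Finset.mem_singleton]
      constructor
      · rintro ⟨hw, w1, w2⟩
        exact hcl w w1.symm w2.symm
      · rintro (rfl | rfl)
        · exact ⟨step3a hu ux hxa, ux.symm, u'x.symm⟩
        · exact ⟨step3a hu uy hya, uy.symm, u'y.symm⟩
    rw [heq, Finset.card_insert_of_notMem (by simp [hxy]), Finset.card_singleton]
  -- cross double count
  have scross : ∑ w ∈ Bs, ((Aa ×ˢ Ab).filter (fun p => G.Adj w p.1 ∧ G.Adj w p.2)).card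
      = Bs.card * 4 := by
    rw [Finset.sum_congr rfl (fun w hw => ?_), Finset.sum_const, smul_eq_mul]
    rw [Finset.filter_product, Finset.card_product, cardN1 w hw, cardN2 w hw]
  have scross2 : ∑ p ∈ Aa ×ˢ Ab, (Bs.filter (fun w => G.Adj w p.1 ∧ G.Adj w p.2)).card
      = Aa.card * Ab.card * 2 := by
    rw [Finset.sum_congr rfl (fun p hp => N3 p.1 p.2 (Finset.mem_product.mp hp).1
      (Finset.mem_product.mp hp).2), Finset.sum_const, smul_eq_mul, Finset.card_product]
  have e1 : Bs.card * 4 = Aa.card * Ab.card * 2 := by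
    rw [← scross, ← scross2]
    exact double_count Bs (Aa ×ˢ Ab) (fun w p => G.Adj w p.1 ∧ G.Adj w p.2)
  -- same-class double count
  have ssame : ∑ w ∈ Bs, ((Aa ×ˢ Aa).filter
      (fun p => p.1 ≠ p.2 ∧ G.Adj w p.1 ∧ G.Adj w p.2)).card = Bs.card * 2 := by
    rw [Finset.sum_congr rfl (fun w hw => ?_), Finset.sum_const, smul_eq_mul]
    obtain ⟨x, y, hxy, heq⟩ := N1 w hw
    have hx : x ∈ Aa ∧ G.Adj w x := by
      have : x ∈ Aa.filter (fun u => G.Adj w u) := by rw [heq]; simp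
      simpa using this
    have hy : y ∈ Aa ∧ G.Adj w y := by
      have : y ∈ Aa.filter (fun u => G.Adj w u) := by rw [heq]; simp
      simpa using this
    have hpair : (Aa ×ˢ Aa).filter (fun p => p.1 ≠ p.2 ∧ G.Adj w p.1 ∧ G.Adj w p.2)
        = {(x, y), (y, x)} := by
      ext ⟨z1, z2⟩
      simp only [Finset.mem_filter, Finset.mem_product, Finset.mem_insert,
        Finset.mem_singleton, Prod.mk.injEq]
      constructor
      · rintro ⟨⟨m1, m2⟩, hne12, w1, w2⟩
        have c1 : z1 = x ∨ z1 = y := by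
          have : z1 ∈ Aa.filter (fun u => G.Adj w u) := Finset.mem_filter.mpr ⟨m1, w1⟩
          rw [heq] at this; simpa using this
        have c2 : z2 = x ∨ z2 = y := by
          have : z2 ∈ Aa.filter (fun u => G.Adj w u) := Finset.mem_filter.mpr ⟨m2, w2⟩
          rw [heq] at this; simpa using this
        rcases c1 with rfl | rfl <;> rcases c2 with rfl | rfl <;> tauto
      · rintro (⟨rfl, rfl⟩ | ⟨rfl, rfl⟩)
        · exact ⟨⟨hx.1, hy.1⟩, hxy, hx.2, hy.2⟩
        · exact ⟨⟨hy.1, hx.1⟩, hxy.symm, hy.2, hx.2⟩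
    rw [hpair, Finset.card_insert_of_notMem (by simp [Prod.ext_iff, hxy]),
      Finset.card_singleton]
  have ssame2 : ∑ p ∈ Aa ×ˢ Aa, (Bs.filter
      (fun w => p.1 ≠ p.2 ∧ G.Adj w p.1 ∧ G.Adj w p.2)).card
      = Aa.card * Aa.card - Aa.card := by
    have h1 : ∀ p ∈ Aa ×ˢ Aa, (Bs.filter
        (fun w => p.1 ≠ p.2 ∧ G.Adj w p.1 ∧ G.Adj w p.2)).card
        = if p.1 ≠ p.2 then 1 else 0 := by
      intro p hp
      by_cases h : p.1 = p.2
      · rw [Finset.filter_false_of_mem (fun w _ hcon => hcon.1 h), Finset.card_empty,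
          if_neg (not_not.mpr h)]
      · rw [if_pos h]
        obtain ⟨z, hz⟩ := N4 p.1 p.2 (Finset.mem_product.mp hp).1 (Finset.mem_product.mp hp).2 h
        have : Bs.filter (fun w => p.1 ≠ p.2 ∧ G.Adj w p.1 ∧ G.Adj w p.2)
            = Bs.filter (fun w => G.Adj w p.1 ∧ G.Adj w p.2) :=
          Finset.filter_congr (fun w hw => by tauto)
        rw [this, hz, Finset.card_singleton]
    rw [Finset.sum_congr rfl h1, ← Finset.card_filter]
    have : (Aa ×ˢ Aa).filter (fun p => p.1 ≠ p.2) = Aa.offDiag := by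
      ext ⟨z1, z2⟩
      simp only [Finset.mem_filter, Finset.mem_product, Finset.mem_offDiag]
      tauto
    rw [this, Finset.offDiag_card]
  have e2 : Bs.card * 2 = Aa.card * Aa.card - Aa.card := by
    rw [← ssame, ← ssame2]
    exact double_count Bs (Aa ×ˢ Aa) (fun w p => p.1 ≠ p.2 ∧ G.Adj w p.1 ∧ G.Adj w p.2)
  -- lower bounds
  obtain ⟨v0, hv0⟩ := hBx
  have hv0B : v0 ∈ Bs := memBs.mpr hv0
  have hka2 : 2 ≤ Aa.card := by
    obtain ⟨x, y, hxy, heq⟩ := N1 v0 hv0B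
    calc 2 = ({x, y} : Finset V).card := by
            rw [Finset.card_insert_of_notMem (by simp [hxy]), Finset.card_singleton]
      _ ≤ Aa.card := by rw [← heq]; exact Finset.card_le_card (Finset.filter_subset _ _)
  have hkb2 : 2 ≤ Ab.card := by
    obtain ⟨x, y, hxy, heq⟩ := N2 v0 hv0B
    calc 2 = ({x, y} : Finset V).card := by
            rw [Finset.card_insert_of_notMem (by simp [hxy]), Finset.card_singleton]
      _ ≤ Ab.card := by rw [← heq]; exact Finset.card_le_card (Finset.filter_subset _ _)
  refine ⟨hka2, ?_⟩
  have h5 : Aa.card * (Aa.card - 1) = Aa.card * Aa.card - Aa.card := by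
    cases' Aa.card with n
    · simp
    · simp only [Nat.succ_sub_one, Nat.mul_succ, Nat.succ_mul]
      omega
  have hmul : Aa.card * Ab.card = Aa.card * (Aa.card - 1) := by
    have h4 : Aa.card * Ab.card * 2 = Aa.card * (Aa.card - 1) * 2 := by
      calc Aa.card * Ab.card * 2 = Bs.card * 4 := e1.symm
        _ = Bs.card * 2 * 2 := by ring
        _ = (Aa.card * Aa.card - Aa.card) * 2 := by rw [e2]
        _ = Aa.card * (Aa.card - 1) * 2 := by rw [h5]
    exact Nat.eq_of_mul_eq_mul_right (by norm_num) h4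
  have := Nat.eq_of_mul_eq_mul_left (by omega : 0 < Aa.card) hmul
  omega
/-- every neighbour of a pendant vertex is its attachment, when there are no `B` vertices -/
lemma nbr_pendant {a b c : V} (td : TriData G a b c)
    (hsat : ∀ u v : V, u ≠ v → ¬ G.Adj u v →
      ∃! G' : (G ⊔ SimpleGraph.fromEdgeSet {s(u, v)}).Subgraph, IsCopy diamond G')
    (hnoB : ∀ v, (v ≠ a ∧ v ≠ b ∧ v ≠ c) → G.Adj v a ∨ G.Adj v b ∨ G.Adj v c)
    {u : V} (hu : u ≠ a ∧ u ≠ b ∧ u ≠ c) (hadj : G.Adj u a) :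
    ∀ z, G.Adj u z → z = a := by
  intro z hz
  by_contra hza
  obtain ⟨⟨zb, zc⟩, n1, n2, n3⟩ := step3 td hsat hu.1 hu.2.1 hu.2.2 hadj hz hza
  rcases hnoB z ⟨hza, zb, zc⟩ with h | h | h
  exacts [n1 h, n2 h, n3 h]

lemma unique_outside {a b c : V} (td : TriData G a b c)
    (hfree : ∀ G' : G.Subgraph, ¬ IsCopy diamond G')
    (hsat : ∀ u v : V, u ≠ v → ¬ G.Adj u v →
      ∃! G' : (G ⊔ SimpleGraph.fromEdgeSet {s(u, v)}).Subgraph, IsCopy diamond G')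
    (hnoB : ∀ v, (v ≠ a ∧ v ≠ b ∧ v ≠ c) → G.Adj v a ∨ G.Adj v b ∨ G.Adj v c)
    {u w : V} (hu : u ≠ a ∧ u ≠ b ∧ u ≠ c) (hw : w ≠ a ∧ w ≠ b ∧ w ≠ c) : u = w := by
  by_contra hne
  have nbr : ∀ z, G.Adj u z → (z = a ∨ z = b ∨ z = c) := by
    rcases hnoB u hu with h | h | h
    · exact fun z hz => Or.inl (nbr_pendant td hsat hnoB hu h z hz)
    · exact fun z hz => Or.inr (Or.inl (nbr_pendant td.rot hsat
        (fun v hv => by have := hnoB v (by tauto); tauto) (by tauto) h z hz))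
    · exact fun z hz => Or.inr (Or.inr (nbr_pendant td.rot.rot hsat
        (fun v hv => by have := hnoB v (by tauto); tauto) (by tauto) h z hz))
  have single : ∀ z z', G.Adj u z → G.Adj u z' → z = z' := by
    rcases hnoB u hu with h | h | h
    · intro z z' h1 h2
      rw [nbr_pendant td hsat hnoB hu h z h1, nbr_pendant td hsat hnoB hu h z' h2]
    · intro z z' h1 h2
      rw [nbr_pendant td.rot hsat (fun v hv => by have := hnoB v (by tauto); tauto)
          (by tauto) h z h1,
        nbr_pendant td.rot hsat (fun v hv => by have := hnoB v (by tauto); tauto)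
          (by tauto) h z' h2]
    · intro z z' h1 h2
      rw [nbr_pendant td.rot.rot hsat (fun v hv => by have := hnoB v (by tauto); tauto)
          (by tauto) h z h1,
        nbr_pendant td.rot.rot hsat (fun v hv => by have := hnoB v (by tauto); tauto)
          (by tauto) h z' h2]
  have hnadj : ¬ G.Adj u w := fun h => by
    rcases nbr w h with rfl | rfl | rfl
    · exact hw.1 rfl
    · exact hw.2.1 rfl
    · exact hw.2.2 rfl
  obtain ⟨x, y, hxy, ux, uy, -, -, -⟩ :=
    commons_two_outside td hfree hsat hne hnadj hu hw
  exact hxy (single x y ux uy)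

/-- build the isomorphism in the 4-vertex case -/
lemma build_iso {a b c d : V} (td : TriData G a b c)
    (hall : ∀ v : V, v = a ∨ v = b ∨ v = c ∨ v = d)
    (hda : d ≠ a) (hdb : d ≠ b) (hdc : d ≠ c)
    (adc : G.Adj d c) (nda : ¬ G.Adj d a) (ndb : ¬ G.Adj d b) : Nonempty (G ≃g C3star) := by
  obtain ⟨hab, hac, hbc, aab, aac, abc, -⟩ := id td
  have l1 : ¬ G.Adj a a := G.irrefl
  have l2 : ¬ G.Adj b b := G.irrefl
  have l3 : ¬ G.Adj c c := G.irrefl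
  have l4 : ¬ G.Adj d d := G.irrefl
  have s1 : G.Adj b a := aab.symm
  have s2 : G.Adj c a := aac.symm
  have s3 : G.Adj c b := abc.symm
  have s4 : G.Adj c d := adc.symm
  have n1 : ¬ G.Adj a d := fun h => nda h.symm
  have n2 : ¬ G.Adj b d := fun h => ndb h.symm
  set f : Fin 4 → V := ![a, b, c, d] with hfdef
  have hinj : Function.Injective f := by
    intro i j hij
    fin_cases i <;> fin_cases j <;> simp_all [hfdef] <;>
      first
        | rfl
        | exact absurd hij (by assumption)
        | exact absurd hij.symm (by assumption)
  have hsurj : Function.Surjective f := by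
    intro v
    rcases hall v with rfl | rfl | rfl | rfl
    exacts [⟨0, rfl⟩, ⟨1, rfl⟩, ⟨2, rfl⟩, ⟨3, rfl⟩]
  refine ⟨(RelIso.mk (Equiv.ofBijective f ⟨hinj, hsurj⟩) ?_ : C3star ≃g G).symm⟩
  intro i j
  show G.Adj (f i) (f j) ↔ C3star.Adj i j
  fin_cases i <;> fin_cases j <;> simp only [hfdef] <;>
    norm_num <;>
    first
      | exact iff_of_true (by assumption) (by decide)
      | exact iff_of_false (by assumption) (by decide)
end

lemma four_distinct_univ : ∀ p q r s : Fin 4, p ≠ q → p ≠ r → p ≠ s → q ≠ r → q ≠ s → r ≠ s →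
    ∀ x : Fin 4, x = p ∨ x = q ∨ x = r ∨ x = s := by decide

/-- in a 4-vertex host graph missing exactly the pair `{p0, q0}`, the diamond copy is unique -/
lemma unique_diamond_subgraph (K : SimpleGraph (Fin 4)) (p0 q0 r0 s0 : Fin 4)
    (d01 : p0 ≠ q0) (d02 : p0 ≠ r0) (d03 : p0 ≠ s0) (d12 : q0 ≠ r0) (d13 : q0 ≠ s0)
    (d23 : r0 ≠ s0)
    (a1 : K.Adj p0 r0) (a2 : K.Adj p0 s0) (a3 : K.Adj q0 r0) (a4 : K.Adj q0 s0)
    (a5 : K.Adj r0 s0) (hmiss : ¬ K.Adj p0 q0) :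
    ∃! G' : K.Subgraph, IsCopy diamond G' := by
  refine ⟨pattSub K p0 q0 r0 s0 d01 d02 d03 d12 d13 d23 a1 a2 a3 a4 a5,
    pattSub_isCopy K p0 q0 r0 s0 d01 d02 d03 d12 d13 d23 a1 a2 a3 a4 a5, ?_⟩
  intro C hC
  rw [iscopy_iff] at hC
  obtain ⟨p, q, r, s, hpq, hpr, hps, hqr, hqs, hrs, hverts, hAdj⟩ := hC
  have cover : ∀ x : Fin 4, x = p ∨ x = q ∨ x = r ∨ x = s :=
    four_distinct_univ p q r s hpq hpr hps hqr hqs hrs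
  have cover0 : ∀ x : Fin 4, x = p0 ∨ x = q0 ∨ x = r0 ∨ x = s0 :=
    four_distinct_univ p0 q0 r0 s0 d01 d02 d03 d12 d13 d23
  have hkey : (p0 = p ∧ q0 = q) ∨ (p0 = q ∧ q0 = p) := by
    by_contra hcon
    have hpat : patAdj p q r s p0 q0 := by
      refine ⟨cover p0, cover q0, d01, ?_, ?_⟩
      · intro h; exact hcon (Or.inl h)
      · intro h; exact hcon (Or.inr h)
    exact hmiss (C.adj_sub ((hAdj p0 q0).mpr hpat))
  have hiff : ∀ x y, patAdj p q r s x y ↔ patAdj p0 q0 r0 s0 x y := by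
    intro x y
    constructor
    · rintro ⟨-, -, hxy, h4, h5⟩
      refine ⟨cover0 x, cover0 y, hxy, ?_, ?_⟩
      · rcases hkey with ⟨h, h'⟩ | ⟨h, h'⟩
        · rintro ⟨rfl, rfl⟩; exact h4 ⟨h, h'⟩
        · rintro ⟨rfl, rfl⟩; exact h5 ⟨h, h'⟩
      · rcases hkey with ⟨h, h'⟩ | ⟨h, h'⟩
        · rintro ⟨rfl, rfl⟩; exact h5 ⟨h', h⟩
        · rintro ⟨rfl, rfl⟩; exact h4 ⟨h', h⟩
    · rintro ⟨-, -, hxy, h4, h5⟩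
      refine ⟨cover x, cover y, hxy, ?_, ?_⟩
      · rcases hkey with ⟨h, h'⟩ | ⟨h, h'⟩
        · rintro ⟨rfl, rfl⟩; exact h4 ⟨h.symm, h'.symm⟩
        · rintro ⟨rfl, rfl⟩; exact h5 ⟨h'.symm, h.symm⟩
      · rcases hkey with ⟨h, h'⟩ | ⟨h, h'⟩
        · rintro ⟨rfl, rfl⟩; exact h5 ⟨h'.symm, h.symm⟩
        · rintro ⟨rfl, rfl⟩; exact h4 ⟨h.symm, h'.symm⟩
  apply SimpleGraph.Subgraph.ext
  · rw [hverts]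
    apply Set.eq_of_subset_of_subset <;> intro x _
    · rcases cover0 x with rfl | rfl | rfl | rfl <;> simp [pattSub]
    · simp only [pattSub, Set.mem_insert_iff, Set.mem_singleton_iff] at *
      exact cover x
  · funext x y
    exact propext ((hAdj x y).trans (hiff x y))

lemma c3_no_patt : ∀ p q r s : Fin 4,
    ¬((p ≠ q ∧ p ≠ r ∧ p ≠ s ∧ q ≠ r ∧ q ≠ s ∧ r ≠ s) ∧
      C3star.Adj p r ∧ C3star.Adj p s ∧ C3star.Adj q r ∧ C3star.Adj q s ∧ C3star.Adj r s) := by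
  decide

lemma C3star_free : ∀ G' : C3star.Subgraph, ¬ IsCopy diamond G' := by
  intro G' h
  obtain ⟨p, q, r, s, ⟨h1, h2, h3, h4, h5, h6⟩, a1, a2, a3, a4, a5⟩ := copy_patt h
  exact c3_no_patt p q r s ⟨⟨h1, h2, h3, h4, h5, h6⟩, a1, a2, a3, a4, a5⟩

lemma classify (V : Type) [Fintype V] (G : SimpleGraph V) (hcard : 4 ≤ Fintype.card V)
    (husat : UniquelySaturated diamond G) (htri : (G.cliqueSet 3).ncard = 1) :
    Nonempty (G ≃g C3star) := by
  classical
  obtain ⟨hfree, hsat⟩ := husat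
  obtain ⟨T, hT⟩ := Set.ncard_eq_one.mp htri
  have hTc : G.IsNClique 3 T := SimpleGraph.mem_cliqueSet_iff.mp (by rw [hT]; rfl)
  obtain ⟨a, b, c, hab, hac, hbc, rfl⟩ := Finset.card_eq_three.mp hTc.2
  have aab : G.Adj a b := hTc.1 (by simp) (by simp) hab
  have aac : G.Adj a c := hTc.1 (by simp) (by simp) hac
  have abc : G.Adj b c := hTc.1 (by simp) (by simp) hbc
  have uniq : ∀ x y z : V, x ≠ y → x ≠ z → y ≠ z → G.Adj x y → G.Adj x z → G.Adj y z →
      ((x = a ∨ x = b ∨ x = c) ∧ (y = a ∨ y = b ∨ y = c) ∧ (z = a ∨ z = b ∨ z = c)) := by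
    intro x y z hxy hxz hyz a1 a2 a3
    have hcl : G.IsNClique 3 {x, y, z} := by
      constructor
      · intro p hp q hq hpq
        simp only [Finset.coe_insert, Set.mem_insert_iff, Finset.coe_singleton,
          Set.mem_singleton_iff] at hp hq
        rcases hp with rfl | rfl | rfl <;> rcases hq with rfl | rfl | rfl <;>
          first
            | exact absurd rfl hpq
            | assumption
            | exact a1.symm
            | exact a2.symm
            | exact a3.symm
      · rw [Finset.card_insert_of_notMem (by simp [hxy, hxz]),
          Finset.card_insert_of_notMem (by simp [hyz]), Finset.card_singleton]
    have hmem : ({x, y, z} : Finset V) = {a, b, c} := by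
      have := SimpleGraph.mem_cliqueSet_iff.mpr hcl
      rw [hT, Set.mem_singleton_iff] at this
      exact this
    refine ⟨?_, ?_, ?_⟩
    · have : x ∈ ({a, b, c} : Finset V) := hmem ▸ (by simp : x ∈ ({x, y, z} : Finset V))
      simpa using this
    · have : y ∈ ({a, b, c} : Finset V) := hmem ▸ (by simp : y ∈ ({x, y, z} : Finset V))
      simpa using this
    · have : z ∈ ({a, b, c} : Finset V) := hmem ▸ (by simp : z ∈ ({x, y, z} : Finset V))
      simpa using this
  have td : TriData G a b c := ⟨hab, hac, hbc, aab, aac, abc, uniq⟩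
  by_cases hBex : ∃ v, (v ≠ a ∧ v ≠ b ∧ v ≠ c) ∧ ¬ G.Adj v a ∧ ¬ G.Adj v b ∧ ¬ G.Adj v c
  · exfalso
    have norm1 : ∀ t : V, (Finset.univ.filter fun x => (x ≠ b ∧ x ≠ c ∧ x ≠ a) ∧ G.Adj x t)
        = (Finset.univ.filter fun x => (x ≠ a ∧ x ≠ b ∧ x ≠ c) ∧ G.Adj x t) :=
      fun t => Finset.filter_congr (fun x _ => by tauto)
    have norm2 : ∀ t : V, (Finset.univ.filter fun x => (x ≠ c ∧ x ≠ a ∧ x ≠ b) ∧ G.Adj x t)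
        = (Finset.univ.filter fun x => (x ≠ a ∧ x ≠ b ∧ x ≠ c) ∧ G.Adj x t) :=
      fun t => Finset.filter_congr (fun x _ => by tauto)
    obtain ⟨h2a, hrel1⟩ := count_rel td hfree hsat hBex
    obtain ⟨h2b, hrel2⟩ := count_rel td.rot hfree hsat
      (by obtain ⟨v, hv⟩ := hBex; exact ⟨v, by tauto⟩)
    obtain ⟨h2c, hrel3⟩ := count_rel td.rot.rot hfree hsat
      (by obtain ⟨v, hv⟩ := hBex; exact ⟨v, by tauto⟩)
    rw [norm1, norm1] at hrel2
    rw [norm1] at h2b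
    rw [norm2, norm2] at hrel3
    rw [norm2] at h2c
    omega
  · have hnoB : ∀ v, (v ≠ a ∧ v ≠ b ∧ v ≠ c) → G.Adj v a ∨ G.Adj v b ∨ G.Adj v c := by
      intro v hv
      by_contra hcon
      push_neg at hcon
      exact hBex ⟨v, hv, hcon⟩
    have hd3 : ∃ d, d ≠ a ∧ d ≠ b ∧ d ≠ c := by
      by_contra h
      push_neg at h
      have hsub : (Finset.univ : Finset V) ⊆ {a, b, c} := by
        intro v _
        by_cases h1 : v = a
        · simp [h1]
        by_cases h2 : v = b
        · simp [h2]
        simp [h v h1 h2]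
      have hle := Finset.card_le_card hsub
      have e1 := Finset.card_insert_le a ({b, c} : Finset V)
      have e2 := Finset.card_insert_le b ({c} : Finset V)
      simp only [Finset.card_singleton, Finset.card_univ] at hle e1 e2
      omega
    obtain ⟨d, hd⟩ := hd3
    have hall : ∀ v : V, v = a ∨ v = b ∨ v = c ∨ v = d := by
      intro v
      by_cases h1 : v = a
      · exact Or.inl h1
      by_cases h2 : v = b
      · exact Or.inr (Or.inl h2)
      by_cases h3 : v = c
      · exact Or.inr (Or.inr (Or.inl h3))
      exact Or.inr (Or.inr (Or.inr (unique_outside td hfree hsat hnoB ⟨h1, h2, h3⟩ hd)))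
    rcases hnoB d hd with hda | hdb | hdc
    · exact build_iso td.rot (fun v => by have := hall v; tauto) hd.2.1 hd.2.2 hd.1 hda
        (pend_not td hd.1 hd.2.1 hd.2.2 hda) (pend_not td.swap hd.1 hd.2.2 hd.2.1 hda)
    · exact build_iso td.rot.rot (fun v => by have := hall v; tauto) hd.2.2 hd.1 hd.2.1 hdb
        (pend_not td.rot hd.2.1 hd.2.2 hd.1 hdb) (pend_not td.rot.swap hd.2.1 hd.1 hd.2.2 hdb)
    · exact build_iso td (fun v => by have := hall v; tauto) hd.1 hd.2.1 hd.2.2 hdc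
        (pend_not td.rot.rot hd.2.2 hd.1 hd.2.1 hdc)
        (pend_not td.rot.rot.swap hd.2.2 hd.2.1 hd.1 hdc)

lemma C3star_sat : ∀ u v : Fin 4, u ≠ v → ¬ C3star.Adj u v →
    ∃! G' : (C3star ⊔ SimpleGraph.fromEdgeSet {s(u, v)}).Subgraph, IsCopy diamond G' := by
  intro u v hne hnadj
  fin_cases u <;> fin_cases v <;>
    first
      | exact absurd rfl hne
      | exact absurd (by decide) hnadj
      | exact unique_diamond_subgraph _ 1 3 0 2 (by decide) (by decide) (by decide) (by decide)
          (by decide) (by decide)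
          ((H_adj (by decide) _ _).mpr (Or.inl (by decide)))
          ((H_adj (by decide) _ _).mpr (Or.inl (by decide)))
          ((H_adj (by decide) _ _).mpr (Or.inr (Or.inr ⟨rfl, rfl⟩)))
          ((H_adj (by decide) _ _).mpr (Or.inl (by decide)))
          ((H_adj (by decide) _ _).mpr (Or.inl (by decide)))
          (by rw [H_adj (by decide)]
              rintro (h | ⟨h1, -⟩ | ⟨h1, -⟩) <;>
                first | exact absurd h (by decide) | exact absurd h1 (by decide))
      | exact unique_diamond_subgraph _ 1 3 0 2 (by decide) (by decide) (by decide) (by decide)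
          (by decide) (by decide)
          ((H_adj (by decide) _ _).mpr (Or.inl (by decide)))
          ((H_adj (by decide) _ _).mpr (Or.inl (by decide)))
          ((H_adj (by decide) _ _).mpr (Or.inr (Or.inl ⟨rfl, rfl⟩)))
          ((H_adj (by decide) _ _).mpr (Or.inl (by decide)))
          ((H_adj (by decide) _ _).mpr (Or.inl (by decide)))
          (by rw [H_adj (by decide)]
              rintro (h | ⟨h1, -⟩ | ⟨h1, -⟩) <;>
                first | exact absurd h (by decide) | exact absurd h1 (by decide))
      | exact unique_diamond_subgraph _ 0 3 1 2 (by decide) (by decide) (by decide) (by decide)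
          (by decide) (by decide)
          ((H_adj (by decide) _ _).mpr (Or.inl (by decide)))
          ((H_adj (by decide) _ _).mpr (Or.inl (by decide)))
          ((H_adj (by decide) _ _).mpr (Or.inr (Or.inr ⟨rfl, rfl⟩)))
          ((H_adj (by decide) _ _).mpr (Or.inl (by decide)))
          ((H_adj (by decide) _ _).mpr (Or.inl (by decide)))
          (by rw [H_adj (by decide)]
              rintro (h | ⟨h1, -⟩ | ⟨h1, -⟩) <;>
                first | exact absurd h (by decide) | exact absurd h1 (by decide))
      | exact unique_diamond_subgraph _ 0 3 1 2 (by decide) (by decide) (by decide) (by decide)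
          (by decide) (by decide)
          ((H_adj (by decide) _ _).mpr (Or.inl (by decide)))
          ((H_adj (by decide) _ _).mpr (Or.inl (by decide)))
          ((H_adj (by decide) _ _).mpr (Or.inr (Or.inl ⟨rfl, rfl⟩)))
          ((H_adj (by decide) _ _).mpr (Or.inl (by decide)))
          ((H_adj (by decide) _ _).mpr (Or.inl (by decide)))
          (by rw [H_adj (by decide)]
              rintro (h | ⟨h1, -⟩ | ⟨h1, -⟩) <;>
                first | exact absurd h (by decide) | exact absurd h1 (by decide))

lemma C3star_cliques : (C3star.cliqueSet 3).ncard = 1 := by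
  have h : C3star.cliqueSet 3 = {({0, 1, 2} : Finset (Fin 4))} := by
    ext t
    rw [SimpleGraph.mem_cliqueSet_iff, Set.mem_singleton_iff]
    revert t
    decide
  rw [h, Set.ncard_singleton]

theorem stmt12 :
    (UniquelySaturated diamond C3star ∧ (C3star.cliqueSet 3).ncard = 1) ∧
      ∀ (V : Type) [Fintype V] (G : SimpleGraph V), 4 ≤ Fintype.card V →
        UniquelySaturated diamond G → (G.cliqueSet 3).ncard = 1 →
          Nonempty (G ≃g C3star) :=
  ⟨⟨⟨C3star_free, C3star_sat⟩, C3star_cliques⟩,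
    fun V _ G hcard husat htri => classify V G hcard husat htri⟩
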